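/- Suppose r* ∈ V_S(x) satisfies the first-order condition: there exists λ ∈ ℝ such that 2κ r*_t + 2φ∫_0^t X*_s ds - ∫_0^t m(s) ds = λ for all t ∈ [0,T], where X*_t = x - ∫_0^t r*_s ds. Then r* minimizes C(r) = κ∫_0^T r_t² dt + φ∫_0^T X_t² dt - ∫_0^T(∫_0^t m(s)ds) r_t dt over V_S(x). -/

import Mathlib

open MeasureTheory Set

private lemma sqIntegrableOn_mul {f g : ℝ → ℝ} {s : Set ℝ}
    (hf : AEStronglyMeasurable f (volume.restrict s))
    (hg : AEStronglyMeasurable g (volume.restrict s))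
    (hf2 : IntegrableOn (fun t => f t ^ 2) s)
    (hg2 : IntegrableOn (fun t => g t ^ 2) s) :
    IntegrableOn (fun t => f t * g t) s := by
  refine Integrable.mono' (hf2.add hg2) (hf.mul hg) ?_
  filter_upwards with t
  simp only [Real.norm_eq_abs, abs_mul, Pi.add_apply]
  nlinarith [sq_nonneg (|f t| - |g t|), sq_abs (f t), sq_abs (g t),
    abs_nonneg (f t), abs_nonneg (g t)]

private lemma parts_fubini {T : ℝ} (hT : 0 < T) {Xs h : ℝ → ℝ}
    (hXsc : ContinuousOn Xs (Set.Icc 0 T))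
    (hhi : IntegrableOn h (Set.Ioc 0 T)) :
    (∫ t in Set.Ioc 0 T, Xs t * (∫ s in Set.Ioc 0 t, h s))
      = ∫ s in Set.Ioc 0 T, (∫ t in Set.Ioc s T, Xs t) * h s := by
  set S : Set ℝ := Set.Ioc (0:ℝ) T with hS
  have hSm : MeasurableSet S := measurableSet_Ioc
  set μ : Measure ℝ := volume.restrict S with hμ
  haveI : IsFiniteMeasure μ := by
    constructor
    rw [hμ, Measure.restrict_apply_univ]
    exact measure_Ioc_lt_top
  set F : ℝ → ℝ → ℝ :=
    fun t s => Set.indicator {p : ℝ × ℝ | p.2 ≤ p.1} (fun p => Xs p.1 * h p.2) (t, s) with hF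
  obtain ⟨C, hC⟩ := (isCompact_Icc (a := (0:ℝ)) (b := T)).exists_bound_of_continuousOn hXsc
  have hC0 : 0 ≤ C := le_trans (norm_nonneg _) (hC 0 (Set.left_mem_Icc.mpr hT.le))
  have hXsm : AEStronglyMeasurable Xs μ :=
    ((hXsc.mono Set.Ioc_subset_Icc_self).aemeasurable hSm).aestronglyMeasurable
  have hhm : AEStronglyMeasurable h μ := hhi.aestronglyMeasurable
  have hFm : AEStronglyMeasurable (Function.uncurry F) (μ.prod μ) := by
    have he : Function.uncurry F
        = Set.indicator {p : ℝ × ℝ | p.2 ≤ p.1} (fun p => Xs p.1 * h p.2) := rfl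
    rw [he]
    exact (hXsm.comp_fst.mul hhm.comp_snd).indicator (measurableSet_le measurable_snd measurable_fst)
  have hFi : Integrable (Function.uncurry F) (μ.prod μ) := by
    refine Integrable.mono' (g := fun p : ℝ × ℝ => C * |h p.2|) ?_ hFm ?_
    · exact (integrable_const C).mul_prod hhi.abs
    · rw [hμ, Measure.prod_restrict]
      filter_upwards [ae_restrict_mem (hSm.prod hSm)] with p hp
      have hp1 : p.1 ∈ Set.Icc 0 T := Set.Ioc_subset_Icc_self hp.1
      by_cases hle : p.2 ≤ p.1
      · have : Function.uncurry F p = Xs p.1 * h p.2 := by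
          simp [hF, Function.uncurry, Set.indicator_apply, hle]
        rw [this, Real.norm_eq_abs, abs_mul]
        exact mul_le_mul_of_nonneg_right (by simpa [Real.norm_eq_abs] using hC p.1 hp1)
          (abs_nonneg _)
      · have : Function.uncurry F p = 0 := by
          simp [hF, Function.uncurry, Set.indicator_apply, hle]
        rw [this]
        simp only [norm_zero]
        positivity
  have hL : ∀ t ∈ S, (∫ s, F t s ∂μ) = Xs t * ∫ s in Set.Ioc 0 t, h s := by
    intro t ht
    have h1 : (fun s => F t s) = Set.indicator (Set.Iic t) (fun s => Xs t * h s) := by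
      funext s
      by_cases hst : s ≤ t
      · simp [hF, Set.indicator_apply, hst]
      · simp [hF, Set.indicator_apply, hst]
    rw [hμ, h1, setIntegral_indicator measurableSet_Iic]
    have h2 : S ∩ Set.Iic t = Set.Ioc 0 t := by
      ext u
      simp only [hS, Set.mem_inter_iff, Set.mem_Ioc, Set.mem_Iic]
      constructor
      · rintro ⟨⟨a, _⟩, c⟩; exact ⟨a, c⟩
      · rintro ⟨a, c⟩; exact ⟨⟨a, c.trans ht.2⟩, c⟩
    rw [h2, integral_const_mul]
  have hR : ∀ s ∈ S, (∫ t, F t s ∂μ) = (∫ t in Set.Ioc s T, Xs t) * h s := by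
    intro s hs
    have h1 : (fun t => F t s) = Set.indicator (Set.Ici s) (fun t => Xs t * h s) := by
      funext t
      by_cases hst : s ≤ t
      · simp [hF, Set.indicator_apply, hst]
      · simp [hF, Set.indicator_apply, hst]
    rw [hμ, h1, setIntegral_indicator measurableSet_Ici]
    have h2 : S ∩ Set.Ici s = Set.Icc s T := by
      ext u
      simp only [hS, Set.mem_inter_iff, Set.mem_Ioc, Set.mem_Ici, Set.mem_Icc]
      constructor
      · rintro ⟨⟨_, b⟩, c⟩; exact ⟨c, b⟩
      · rintro ⟨c, b⟩; exact ⟨⟨lt_of_lt_of_le hs.1 c, b⟩, c⟩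
    rw [h2, integral_Icc_eq_integral_Ioc, integral_mul_const]
  calc (∫ t in S, Xs t * (∫ s in Set.Ioc 0 t, h s))
      = ∫ t, (∫ s, F t s ∂μ) ∂μ :=
        setIntegral_congr_fun hSm (fun t ht => (hL t ht).symm)
    _ = ∫ s, (∫ t, F t s ∂μ) ∂μ := integral_integral_swap hFi
    _ = ∫ s in S, (∫ t in Set.Ioc s T, Xs t) * h s :=
        setIntegral_congr_fun hSm (fun s hs => hR s hs)

/-- The cost functional of the static optimal execution problem. -/
noncomputable def execCost (κ φ T x : ℝ) (m r : ℝ → ℝ) : ℝ :=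
  κ * (∫ t in (0:ℝ)..T, (r t) ^ 2)
    + φ * (∫ t in (0:ℝ)..T, (x - ∫ s in (0:ℝ)..t, r s) ^ 2)
    - ∫ t in (0:ℝ)..T, (∫ s in (0:ℝ)..t, m s) * r t

/-- Admissible static strategies: integrable (with integrable square) and fuel constraint. -/
def execAdm (T x : ℝ) (r : ℝ → ℝ) : Prop :=
  IntervalIntegrable r volume 0 T ∧
  IntervalIntegrable (fun t => (r t) ^ 2) volume 0 T ∧
  (∫ s in (0:ℝ)..T, r s) = x

theorem stmt8 (κ φ T x : ℝ) (hκ : 0 < κ) (hφ : 0 < φ) (hT : 0 < T) (hx : 0 < x)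
    (m : ℝ → ℝ) (hm : IntervalIntegrable m volume 0 T)
    (rstar : ℝ → ℝ) (hadm : execAdm T x rstar)
    (lam : ℝ)
    (hFOC : ∀ t ∈ Set.Icc (0:ℝ) T,
      2 * κ * rstar t
        + 2 * φ * (∫ s in (0:ℝ)..t, (x - ∫ u in (0:ℝ)..s, rstar u))
        - (∫ s in (0:ℝ)..t, m s) = lam) :
    ∀ r : ℝ → ℝ, execAdm T x r → execCost κ φ T x m rstar ≤ execCost κ φ T x m r := by
  obtain ⟨hsi, hsi2, hsx⟩ := hadm
  intro r hr
  obtain ⟨hri, hri2, hrx⟩ := hr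
  have h0T : (0:ℝ) ≤ T := hT.le
  set h : ℝ → ℝ := fun t => r t - rstar t with hh
  set H : ℝ → ℝ := fun t => ∫ s in (0:ℝ)..t, h s with hH
  set Xs : ℝ → ℝ := fun t => x - ∫ s in (0:ℝ)..t, rstar s with hXs
  set G : ℝ → ℝ := fun t => ∫ s in (0:ℝ)..t, Xs s with hG
  set M : ℝ → ℝ := fun t => ∫ s in (0:ℝ)..t, m s with hM
  -- basic integrability
  have hhi : IntervalIntegrable h volume 0 T := hri.sub hsi
  have hint0 : (∫ t in (0:ℝ)..T, h t) = 0 := by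
    simp only [hh]
    rw [intervalIntegral.integral_sub hri hsi, hrx, hsx]
    ring
  -- continuity of the primitives
  have hMc : ContinuousOn M (Icc 0 T) := by
    have := intervalIntegral.continuousOn_primitive_interval' hm left_mem_uIcc
    rw [uIcc_of_le h0T] at this
    rw [hM]; exact this
  have hXsc : ContinuousOn Xs (Icc 0 T) := by
    have := intervalIntegral.continuousOn_primitive_interval' hsi left_mem_uIcc
    rw [uIcc_of_le h0T] at this
    rw [hXs]; exact continuousOn_const.sub this
  have hHc : ContinuousOn H (Icc 0 T) := by
    have := intervalIntegral.continuousOn_primitive_interval' hhi left_mem_uIcc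
    rw [uIcc_of_le h0T] at this
    rw [hH]; exact this
  have hXsII : IntervalIntegrable Xs volume 0 T :=
    ContinuousOn.intervalIntegrable (by rw [uIcc_of_le h0T]; exact hXsc)
  have hGc : ContinuousOn G (Icc 0 T) := by
    have := intervalIntegral.continuousOn_primitive_interval' hXsII left_mem_uIcc
    rw [uIcc_of_le h0T] at this
    rw [hG]; exact this
  -- more integrability
  have hh2 : IntervalIntegrable (fun t => (h t) ^ 2) volume 0 T := by
    rw [intervalIntegrable_iff_integrableOn_Ioc_of_le h0T]
    have hb : IntegrableOn (fun t => 2 * (r t) ^ 2 + 2 * (rstar t) ^ 2) (Ioc 0 T) :=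
      ((hri2.const_mul 2).add (hsi2.const_mul 2)).1
    refine Integrable.mono' hb ?_ ?_
    · have h1 := hhi.1.aestronglyMeasurable
      have h2 := h1.mul h1
      simpa [pow_two, Pi.mul_def] using h2
    · filter_upwards with t
      rw [Real.norm_eq_abs, abs_of_nonneg (sq_nonneg _)]
      simp only [hh]
      nlinarith [sq_nonneg (r t + rstar t)]
  have hrh : IntervalIntegrable (fun t => rstar t * h t) volume 0 T := by
    rw [intervalIntegrable_iff_integrableOn_Ioc_of_le h0T]
    exact sqIntegrableOn_mul hsi.1.aestronglyMeasurable hhi.1.aestronglyMeasurable hsi2.1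
      ((intervalIntegrable_iff_integrableOn_Ioc_of_le h0T).mp hh2)
  have hMh : IntervalIntegrable (fun t => M t * h t) volume 0 T :=
    hhi.continuousOn_mul (by rw [uIcc_of_le h0T]; exact hMc)
  have hGh : IntervalIntegrable (fun t => G t * h t) volume 0 T :=
    hhi.continuousOn_mul (by rw [uIcc_of_le h0T]; exact hGc)
  have hMrs : IntervalIntegrable (fun t => M t * rstar t) volume 0 T :=
    hsi.continuousOn_mul (by rw [uIcc_of_le h0T]; exact hMc)
  have hXsH : IntervalIntegrable (fun t => Xs t * H t) volume 0 T :=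
    ContinuousOn.intervalIntegrable (by rw [uIcc_of_le h0T]; exact hXsc.mul hHc)
  have hH2 : IntervalIntegrable (fun t => (H t) ^ 2) volume 0 T :=
    ContinuousOn.intervalIntegrable (by rw [uIcc_of_le h0T]; exact hHc.pow 2)
  have hXs2 : IntervalIntegrable (fun t => (Xs t) ^ 2) volume 0 T :=
    ContinuousOn.intervalIntegrable (by rw [uIcc_of_le h0T]; exact hXsc.pow 2)
  -- the primitive identity
  have hsub : ∀ t ∈ Icc (0:ℝ) T,
      (∫ s in (0:ℝ)..t, r s) = (∫ s in (0:ℝ)..t, rstar s) + H t := by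
    intro t ht
    have h1 : IntervalIntegrable r volume 0 t :=
      hri.mono_set (by rw [uIcc_of_le h0T, uIcc_of_le ht.1]; exact Icc_subset_Icc le_rfl ht.2)
    have h2 : IntervalIntegrable rstar volume 0 t :=
      hsi.mono_set (by rw [uIcc_of_le h0T, uIcc_of_le ht.1]; exact Icc_subset_Icc le_rfl ht.2)
    simp only [hH, hh]
    rw [intervalIntegral.integral_sub h1 h2]
    ring
  -- expansion lemmas
  have f1 : (∫ t in (0:ℝ)..T, (r t) ^ 2)
      = (∫ t in (0:ℝ)..T, (rstar t) ^ 2) + (∫ t in (0:ℝ)..T, (h t) ^ 2)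
        + 2 * ∫ t in (0:ℝ)..T, rstar t * h t := by
    rw [intervalIntegral.integral_congr
        (g := fun t => (rstar t) ^ 2 + ((h t) ^ 2 + 2 * (rstar t * h t)))
        (fun t _ => by simp only [hh]; ring),
      intervalIntegral.integral_add hsi2 (hh2.add (hrh.const_mul 2)),
      intervalIntegral.integral_add hh2 (hrh.const_mul 2),
      intervalIntegral.integral_const_mul]
    ring
  have f2 : (∫ t in (0:ℝ)..T, (x - ∫ s in (0:ℝ)..t, r s) ^ 2)
      = (∫ t in (0:ℝ)..T, (Xs t) ^ 2) + (∫ t in (0:ℝ)..T, (H t) ^ 2)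
        - 2 * ∫ t in (0:ℝ)..T, Xs t * H t := by
    rw [intervalIntegral.integral_congr
        (g := fun t => (Xs t) ^ 2 + ((H t) ^ 2 - 2 * (Xs t * H t)))
        (fun t ht => ?_),
      intervalIntegral.integral_add hXs2 (hH2.sub (hXsH.const_mul 2)),
      intervalIntegral.integral_sub hH2 (hXsH.const_mul 2),
      intervalIntegral.integral_const_mul]
    · ring
    · rw [uIcc_of_le h0T] at ht
      have h1 := hsub t ht
      simp only [hXs]
      have h2 : x - ∫ s in (0:ℝ)..t, r s = (x - ∫ s in (0:ℝ)..t, rstar s) - H t := by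
        rw [h1]; ring
      rw [h2]; ring
  have f2' : (∫ t in (0:ℝ)..T, (x - ∫ s in (0:ℝ)..t, rstar s) ^ 2)
      = ∫ t in (0:ℝ)..T, (Xs t) ^ 2 :=
    intervalIntegral.integral_congr (fun t _ => by simp only [hXs])
  have f3 : (∫ t in (0:ℝ)..T, (∫ s in (0:ℝ)..t, m s) * r t)
      = (∫ t in (0:ℝ)..T, M t * rstar t) + ∫ t in (0:ℝ)..T, M t * h t := by
    rw [intervalIntegral.integral_congr
        (g := fun t => M t * rstar t + M t * h t)
        (fun t _ => by simp only [hM, hh]; ring),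
      intervalIntegral.integral_add hMrs hMh]
  have f3' : (∫ t in (0:ℝ)..T, (∫ s in (0:ℝ)..t, m s) * rstar t)
      = ∫ t in (0:ℝ)..T, M t * rstar t :=
    intervalIntegral.integral_congr (fun t _ => by simp only [hM])
  -- FOC rewriting
  have hFOC' : ∀ t ∈ Icc (0:ℝ) T, M t = 2 * κ * rstar t + 2 * φ * G t - lam := by
    intro t ht
    have h1 := hFOC t ht
    simp only [hM, hG, hXs] at h1 ⊢
    linarith
  have f4 : (∫ t in (0:ℝ)..T, M t * h t)
      = 2 * κ * (∫ t in (0:ℝ)..T, rstar t * h t)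
        + 2 * φ * (∫ t in (0:ℝ)..T, G t * h t) := by
    rw [intervalIntegral.integral_congr
        (g := fun t => 2 * κ * (rstar t * h t) + (2 * φ * (G t * h t) - lam * h t))
        (fun t ht => ?_),
      intervalIntegral.integral_add (hrh.const_mul (2 * κ))
        ((hGh.const_mul (2 * φ)).sub (hhi.const_mul lam)),
      intervalIntegral.integral_sub (hGh.const_mul (2 * φ)) (hhi.const_mul lam),
      intervalIntegral.integral_const_mul, intervalIntegral.integral_const_mul,
      intervalIntegral.integral_const_mul, hint0]
    · ring
    · rw [uIcc_of_le h0T] at ht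
      simp only
      rw [hFOC' t ht]
      ring
  -- integration by parts via Fubini
  have f5 : (∫ t in (0:ℝ)..T, Xs t * H t) = - ∫ t in (0:ℝ)..T, G t * h t := by
    have hfub := parts_fubini hT hXsc hhi.1
    have step1 : (∫ t in (0:ℝ)..T, Xs t * H t)
        = ∫ t in Ioc (0:ℝ) T, Xs t * (∫ s in Ioc (0:ℝ) t, h s) := by
      rw [intervalIntegral.integral_of_le h0T]
      refine setIntegral_congr_fun measurableSet_Ioc (fun t ht => ?_)
      simp only [hH]
      rw [intervalIntegral.integral_of_le ht.1.le]
    have step2 : (∫ s in Ioc (0:ℝ) T, (∫ t in Ioc s T, Xs t) * h s)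
        = ∫ s in (0:ℝ)..T, (G T - G s) * h s := by
      rw [intervalIntegral.integral_of_le h0T]
      refine setIntegral_congr_fun measurableSet_Ioc (fun s hs => ?_)
      have h1 : IntervalIntegrable Xs volume 0 s :=
        hXsII.mono_set (by rw [uIcc_of_le h0T, uIcc_of_le hs.1.le]; exact Icc_subset_Icc le_rfl hs.2)
      have h2 : IntervalIntegrable Xs volume s T :=
        hXsII.mono_set (by rw [uIcc_of_le h0T, uIcc_of_le hs.2]; exact Icc_subset_Icc hs.1.le le_rfl)
      have h3 := intervalIntegral.integral_add_adjacent_intervals h1 h2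
      have h4 : (∫ t in Ioc s T, Xs t) = G T - G s := by
        rw [← intervalIntegral.integral_of_le hs.2]
        simp only [hG]
        linarith
      rw [h4]
    have step3 : (∫ s in (0:ℝ)..T, (G T - G s) * h s)
        = G T * (∫ t in (0:ℝ)..T, h t) - ∫ t in (0:ℝ)..T, G t * h t := by
      rw [intervalIntegral.integral_congr
          (g := fun s => G T * h s - G s * h s) (fun s _ => by ring),
        intervalIntegral.integral_sub (hhi.const_mul (G T)) hGh,
        intervalIntegral.integral_const_mul]
    rw [step1, hfub, step2, step3, hint0]
    ring
  -- put everything together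
  have hdiff : execCost κ φ T x m r - execCost κ φ T x m rstar
      = κ * (∫ t in (0:ℝ)..T, (h t) ^ 2) + φ * (∫ t in (0:ℝ)..T, (H t) ^ 2) := by
    simp only [execCost]
    rw [f1, f2, f2', f3, f3', f4, f5]
    ring
  have hBnn : 0 ≤ ∫ t in (0:ℝ)..T, (h t) ^ 2 :=
    intervalIntegral.integral_nonneg h0T (fun u _ => sq_nonneg _)
  have hRnn : 0 ≤ ∫ t in (0:ℝ)..T, (H t) ^ 2 :=
    intervalIntegral.integral_nonneg h0T (fun u _ => sq_nonneg _)
  nlinarith [mul_nonneg hκ.le hBnn, mul_nonneg hφ.le hRnn]
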